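/- Under the stated hypotheses, the Hudson–Parthasarathy coefficient identity L₀₁ = −L̃† W̃ holds; explicitly, (−2/√γ)·[−iE₀₁ − E₀₁(γ/2 + iE₁₁)^{−1}E₁₁] = −(i√γ·(γ/2 + iE₁₁)^{−1}E₁₀)†·(γ/2 − iE₁₁)(γ/2 + iE₁₁)^{−1} = i√γ·E₀₁(γ/2 + iE₁₁)^{−1}. -/

import Mathlib

open ContinuousLinearMap

/-- The operator `γ/2 + iE₁₁`. -/
noncomputable def Aop {H : Type*} [NormedAddCommGroup H] [InnerProductSpace ℂ H]
    (γ : ℝ) (E11 : H →L[ℂ] H) : H →L[ℂ] H :=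
  ((γ / 2 : ℝ) : ℂ) • (1 : H →L[ℂ] H) + Complex.I • E11

/-- The operator `γ/2 − iE₁₁`. -/
noncomputable def Bop {H : Type*} [NormedAddCommGroup H] [InnerProductSpace ℂ H]
    (γ : ℝ) (E11 : H →L[ℂ] H) : H →L[ℂ] H :=
  ((γ / 2 : ℝ) : ℂ) • (1 : H →L[ℂ] H) - Complex.I • E11

lemma isUnit_Aop {H : Type*} [NormedAddCommGroup H] [InnerProductSpace ℂ H] [CompleteSpace H]
    (γ : ℝ) (hγ : 0 < γ) (E11 : H →L[ℂ] H) (hnorm : ‖E11‖ < γ / 2) :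
    IsUnit (Aop γ E11) := by
  have hs : ‖-(((2 / γ : ℝ) : ℂ) • (Complex.I • E11))‖ < 1 := by
    rw [norm_neg, norm_smul, norm_smul, Complex.norm_real, Complex.norm_I, one_mul,
      Real.norm_eq_abs, abs_of_pos (by positivity)]
    rw [div_mul_eq_mul_div, div_lt_one hγ]
    linarith
  set u := Units.oneSub _ hs with hu
  have hγ' : (γ : ℂ) ≠ 0 := Complex.ofReal_ne_zero.mpr (ne_of_gt hγ)
  have hscal : ((γ / 2 : ℝ) : ℂ) * ((2 / γ : ℝ) : ℂ) = 1 := by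
    push_cast
    field_simp
  have hscal2 : ((2 / γ : ℝ) : ℂ) * ((γ / 2 : ℝ) : ℂ) = 1 := by
    push_cast
    field_simp
  have hval : Aop γ E11 = (((γ / 2 : ℝ) : ℂ) • (1 : H →L[ℂ] H)) * (u : H →L[ℂ] H) := by
    have : (u : H →L[ℂ] H) = 1 + ((2 / γ : ℝ) : ℂ) • (Complex.I • E11) := by
      simp [hu, Units.oneSub]
    rw [this, smul_mul_assoc, one_mul, smul_add, smul_smul, hscal, one_smul, Aop]
  rw [hval]
  refine IsUnit.mul ?_ u.isUnit
  have h1 : (((γ / 2 : ℝ) : ℂ) • (1 : H →L[ℂ] H)) * (((2 / γ : ℝ) : ℂ) • 1) = 1 := by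
    rw [smul_mul_assoc, one_mul, smul_smul, hscal, one_smul]
  have h2 : (((2 / γ : ℝ) : ℂ) • (1 : H →L[ℂ] H)) * (((γ / 2 : ℝ) : ℂ) • 1) = 1 := by
    rw [smul_mul_assoc, one_mul, smul_smul, hscal2, one_smul]
  exact ⟨⟨_, _, h1, h2⟩, rfl⟩

/-- Hudson–Parthasarathy coefficient identity `L₀₁ = −L̃†W̃`:
`(−2/√γ)·[−iE₀₁ − E₀₁(γ/2 + iE₁₁)⁻¹E₁₁]
  = −(i√γ·(γ/2 + iE₁₁)⁻¹E₁₀)†·(γ/2 − iE₁₁)(γ/2 + iE₁₁)⁻¹ = i√γ·E₀₁(γ/2 + iE₁₁)⁻¹`. -/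
theorem HP_coefficient_L01
    {H : Type*} [NormedAddCommGroup H] [InnerProductSpace ℂ H] [CompleteSpace H]
    (γ : ℝ) (hγ : 0 < γ) (E00 E01 E10 E11 : H →L[ℂ] H)
    (h00 : adjoint E00 = E00) (h11 : adjoint E11 = E11) (h01 : adjoint E01 = E10)
    (hnorm : ‖E11‖ < γ / 2) :
    ((-2 : ℂ) / (Real.sqrt γ : ℂ)) •
        ((-Complex.I) • E01 - E01 * Ring.inverse (Aop γ E11) * E11)
      = -(adjoint ((Complex.I * (Real.sqrt γ : ℂ)) • (Ring.inverse (Aop γ E11) * E10))) *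
          (Bop γ E11 * Ring.inverse (Aop γ E11)) ∧
    -(adjoint ((Complex.I * (Real.sqrt γ : ℂ)) • (Ring.inverse (Aop γ E11) * E10))) *
          (Bop γ E11 * Ring.inverse (Aop γ E11))
      = (Complex.I * (Real.sqrt γ : ℂ)) • (E01 * Ring.inverse (Aop γ E11)) := by
  have hA := isUnit_Aop γ hγ E11 hnorm
  set Q := Ring.inverse (Aop γ E11) with hQ
  have hQA : Q * Aop γ E11 = 1 := Ring.inverse_mul_cancel _ hA
  have hAQ : Aop γ E11 * Q = 1 := Ring.mul_inverse_cancel _ hA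
  have hs : (Real.sqrt γ : ℂ) ≠ 0 := by
    simp [Real.sqrt_eq_zero', not_le, hγ, ne_of_gt hγ]
  have hss : (Real.sqrt γ : ℂ) * (Real.sqrt γ : ℂ) = (γ : ℂ) := by
    rw [← Complex.ofReal_mul, Real.mul_self_sqrt hγ.le]
  -- star of A is B
  have hstarA : star (Aop γ E11) = Bop γ E11 := by
    have h11' : star E11 = E11 := by rw [star_eq_adjoint, h11]
    rw [Aop, Bop, star_add, star_smul, star_smul, star_one, h11', Complex.star_def,
      Complex.conj_ofReal, Complex.conj_I]
    module
  have hstarQB : star Q * Bop γ E11 = 1 := by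
    rw [← hstarA, ← star_mul, hAQ, star_one]
  have hstarE10 : star E10 = E01 := by
    rw [← h01, ← star_eq_adjoint, star_star]
  -- middle = RHS
  have hmid : -(adjoint ((Complex.I * (Real.sqrt γ : ℂ)) • (Q * E10))) *
          (Bop γ E11 * Q)
      = (Complex.I * (Real.sqrt γ : ℂ)) • (E01 * Q) := by
    have hc : star (Complex.I * (Real.sqrt γ : ℂ)) = -(Complex.I * (Real.sqrt γ : ℂ)) := by
      simp [Complex.ext_iff, Complex.conj_ofReal]
    rw [← star_eq_adjoint, star_smul, hc, star_mul, hstarE10, neg_smul, neg_neg, smul_mul_assoc]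
    congr 1
    calc E01 * star Q * (Bop γ E11 * Q) = E01 * (star Q * Bop γ E11) * Q := by
          noncomm_ring
      _ = E01 * Q := by rw [hstarQB, mul_one]
  refine ⟨?_, hmid⟩
  rw [hmid]
  -- express E11 via A
  have hE11 : E11 = (-Complex.I) • Aop γ E11 + (Complex.I * ((γ / 2 : ℝ) : ℂ)) • 1 := by
    rw [Aop]
    rw [smul_add, smul_smul, smul_smul]
    simp [Complex.I_mul_I]
  have hkey : E01 * Q * E11 = (-Complex.I) • E01 + (Complex.I * ((γ / 2 : ℝ) : ℂ)) • (E01 * Q) := by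
    rw [hE11, mul_add, mul_smul_comm, mul_smul_comm, mul_one]
    rw [mul_assoc, hQA, mul_one]
  rw [hkey]
  have : (-Complex.I) • E01 - ((-Complex.I) • E01 + (Complex.I * ((γ / 2 : ℝ) : ℂ)) • (E01 * Q))
      = (-(Complex.I * ((γ / 2 : ℝ) : ℂ))) • (E01 * Q) := by
    module
  rw [this, smul_smul]
  congr 1
  field_simp
  push_cast
  linear_combination -hss
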